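/- For all b₁ and r (as elements of any commutative ring, in particular as indeterminates over ℤ), the polynomial identity (512b₁³r⁹ + 96b₁²r⁵ + 3b₁r)² = (64b₁²r⁶ + 8b₁r²)³ + b₁·(64b₁²r⁶ + 8b₁r²) + r²b₁² holds. Consequently, for every non-zero integer b₁ there are infinitely many pairs of integers (x,y) with x > 0 satisfying y² − x³ − b₁x = r²b₁² for some integer r with x ≥ 64b₁²r⁶ + 8b₁r², so that |y² − x³ − b₁x| = O_{b₁}(x^{1/3}). -/
import Mathlib


/-- The polynomial identity
`(512b₁³r⁹ + 96b₁²r⁵ + 3b₁r)² = (64b₁²r⁶ + 8b₁r²)³ + b₁(64b₁²r⁶ + 8b₁r²) + r²b₁²`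
holds in every commutative ring; consequently, for every nonzero integer `b₁` there are
infinitely many pairs `(x, y) ∈ ℤ²` with `x > 0` satisfying
`y² - x³ - b₁x = r²b₁²` for some `r ∈ ℤ` with `x ≥ 64b₁²r⁶ + 8b₁r²`, and with
`|y² - x³ - b₁x| ≤ C·x^{1/3}` for a constant `C = C(b₁) > 0`. -/
theorem rouse_identity_and_infinitely_many_points :
    (∀ (R : Type) [CommRing R] (b₁ r : R),
      (512 * b₁ ^ 3 * r ^ 9 + 96 * b₁ ^ 2 * r ^ 5 + 3 * b₁ * r) ^ 2
        = (64 * b₁ ^ 2 * r ^ 6 + 8 * b₁ * r ^ 2) ^ 3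
          + b₁ * (64 * b₁ ^ 2 * r ^ 6 + 8 * b₁ * r ^ 2) + r ^ 2 * b₁ ^ 2)
    ∧ ∀ b₁ : ℤ, b₁ ≠ 0 → ∃ C : ℝ, 0 < C ∧
        {p : ℤ × ℤ | 0 < p.1
          ∧ (∃ r : ℤ, p.2 ^ 2 - p.1 ^ 3 - b₁ * p.1 = r ^ 2 * b₁ ^ 2
              ∧ 64 * b₁ ^ 2 * r ^ 6 + 8 * b₁ * r ^ 2 ≤ p.1)
          ∧ (|p.2 ^ 2 - p.1 ^ 3 - b₁ * p.1| : ℝ)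
              ≤ C * (p.1 : ℝ) ^ ((1 : ℝ) / 3)}.Infinite := by
  constructor
  · intro R _ b₁ r; ring
  · intro b₁ hb
    have hbR : (b₁ : ℝ) ≠ 0 := Int.cast_ne_zero.mpr hb
    have hb1 : (1 : ℤ) ≤ b₁ ^ 2 := by
      have := Int.one_le_abs (by simpa using hb)
      nlinarith [sq_abs b₁]
    have hneg : -b₁ ^ 2 ≤ b₁ := by
      nlinarith [neg_abs_le b₁, Int.one_le_abs (show b₁ ≠ 0 from hb), sq_abs b₁]
    refine ⟨(b₁ : ℝ) ^ 2, by positivity, ?_⟩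
    set X : ℕ → ℤ := fun n => 64 * b₁ ^ 2 * ((n : ℤ) + 1) ^ 6 + 8 * b₁ * ((n : ℤ) + 1) ^ 2
      with hX
    set Y : ℕ → ℤ := fun n =>
      512 * b₁ ^ 3 * ((n : ℤ) + 1) ^ 9 + 96 * b₁ ^ 2 * ((n : ℤ) + 1) ^ 5 + 3 * b₁ * ((n : ℤ) + 1)
      with hY
    have hXmono : StrictMono X := by
      apply strictMono_nat_of_lt_succ
      intro n
      have ha : (1 : ℤ) ≤ (n : ℤ) + 1 := by omega
      simp only [hX, Nat.cast_succ]
      set a : ℤ := (n : ℤ) + 1 with hadef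
      have h2 : 0 ≤ 2 * a + 1 := by omega
      have key2 : -b₁ ^ 2 * (2 * a + 1) ≤ b₁ * (2 * a + 1) :=
        mul_le_mul_of_nonneg_right hneg h2
      nlinarith [mul_le_mul_of_nonneg_right hb1
        (by positivity : (0:ℤ) ≤ a ^ 5), mul_pos (lt_of_lt_of_le zero_lt_one hb1)
        (by positivity : (0:ℤ) < a ^ 4), sq_nonneg a, key2,
        mul_le_mul_of_nonneg_right hb1 (by positivity : (0:ℤ) ≤ a ^ 3)]
    apply Set.infinite_of_injective_forall_mem (f := fun n : ℕ => (X n, Y n))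
    · intro a b hab
      exact hXmono.injective (congrArg Prod.fst hab)
    · intro n
      set r : ℤ := (n : ℤ) + 1 with hr
      have hr1 : (1 : ℤ) ≤ r := by omega
      have hr6 : r ^ 6 ≤ X n := by
        simp only [hX]
        rw [← hr]
        have h2 : r ^ 2 ≤ r ^ 6 := pow_le_pow_right₀ hr1 (by norm_num)
        have key2 : -b₁ ^ 2 * r ^ 2 ≤ b₁ * r ^ 2 :=
          mul_le_mul_of_nonneg_right hneg (sq_nonneg r)
        nlinarith [mul_le_mul_of_nonneg_right hb1 (by positivity : (0:ℤ) ≤ r ^ 6),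
          mul_le_mul_of_nonneg_left h2 (show (0:ℤ) ≤ b₁ ^ 2 by positivity), key2]
      have hr6pos : (1 : ℤ) ≤ r ^ 6 := by simpa using pow_le_pow_left₀ (by norm_num : (0:ℤ) ≤ 1) hr1 6
      have hXpos : 0 < X n := lt_of_lt_of_le (lt_of_lt_of_le zero_lt_one hr6pos) hr6
      have key : (Y n) ^ 2 - (X n) ^ 3 - b₁ * (X n) = r ^ 2 * b₁ ^ 2 := by
        simp only [hX, hY, hr]; ring
      refine ⟨hXpos, ⟨r, key, le_of_eq rfl⟩, ?_⟩
      show |((Y n : ℝ))^2 - ((X n : ℝ))^3 - (b₁:ℝ)*(X n : ℝ)|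
          ≤ (b₁:ℝ)^2 * ((X n : ℝ)) ^ ((1:ℝ)/3)
      have keyR : ((Y n : ℝ))^2 - ((X n : ℝ))^3 - (b₁:ℝ)*(X n : ℝ)
          = (r:ℝ)^2 * (b₁:ℝ)^2 := by exact_mod_cast key
      rw [keyR, abs_of_nonneg (by positivity)]
      have hXR : (0 : ℝ) < (X n : ℝ) := by exact_mod_cast hXpos
      have h13 : (0 : ℝ) ≤ ((X n : ℝ)) ^ ((1:ℝ)/3) := Real.rpow_nonneg hXR.le _
      have hcube : (((X n : ℝ)) ^ ((1:ℝ)/3)) ^ (3 : ℕ) = (X n : ℝ) := by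
        rw [← Real.rpow_natCast (((X n : ℝ)) ^ ((1:ℝ)/3)) 3, ← Real.rpow_mul hXR.le]
        norm_num
      have hr2 : ((r : ℝ)) ^ 2 ≤ ((X n : ℝ)) ^ ((1:ℝ)/3) := by
        apply le_of_pow_le_pow_left₀ (by norm_num : (3:ℕ) ≠ 0) h13
        rw [hcube]
        have : ((r : ℝ)) ^ 6 ≤ (X n : ℝ) := by exact_mod_cast hr6
        nlinarith [this]
      calc (r:ℝ)^2 * (b₁:ℝ)^2 ≤ ((X n : ℝ)) ^ ((1:ℝ)/3) * (b₁:ℝ)^2 :=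
            mul_le_mul_of_nonneg_right hr2 (by positivity)
        _ = (b₁:ℝ)^2 * ((X n : ℝ)) ^ ((1:ℝ)/3) := by ring
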